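/- Let (s_n) be a sequence of reals and (c_{nm}) a nonnegative array with (i) lim_{n→∞} c_{nm} = 0 for each fixed m, and (ii) lim_{n→∞} ∑_{m=1}^n c_{nm} = 1. Set t_n = ∑_{m=1}^n c_{nm} s_m. Then liminf_n s_n ≤ liminf_n t_n ≤ limsup_n t_n ≤ limsup_n s_n (with values in the extended reals). -/

import Mathlib

open Filter

private lemma toeplitz_key
    (s : ℕ → ℝ) (c : ℕ → ℕ → ℝ) (hc : ∀ n m, 0 ≤ c n m)
    (h1 : ∀ m, Tendsto (fun n => c n m) atTop (nhds 0))
    (h2 : Tendsto (fun n => ∑ m ∈ Finset.Icc 1 n, c n m) atTop (nhds 1))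
    (t : ℕ → ℝ) (ht : ∀ n, t n = ∑ m ∈ Finset.Icc 1 n, c n m * s m)
    (L : ℝ) (hL : ∀ᶠ n in atTop, s n < L) :
    limsup (fun n => (t n : EReal)) atTop ≤ (L : EReal) := by
  obtain ⟨N, hN⟩ := eventually_atTop.1 hL
  set u : ℕ → ℝ := fun n =>
    (∑ m ∈ Finset.Icc 1 N, c n m * s m) +
      L * ((∑ m ∈ Finset.Icc 1 n, c n m) - ∑ m ∈ Finset.Icc 1 N, c n m) with hu
  have hA : Tendsto (fun n => ∑ m ∈ Finset.Icc 1 N, c n m * s m) atTop (nhds 0) := by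
    have : Tendsto (fun n => ∑ m ∈ Finset.Icc 1 N, c n m * s m) atTop
        (nhds (∑ m ∈ Finset.Icc 1 N, (0 : ℝ) * s m)) :=
      tendsto_finset_sum _ fun m _ => (h1 m).mul_const (s m)
    simpa using this
  have hA' : Tendsto (fun n => ∑ m ∈ Finset.Icc 1 N, c n m) atTop (nhds 0) := by
    have : Tendsto (fun n => ∑ m ∈ Finset.Icc 1 N, c n m) atTop
        (nhds (∑ m ∈ Finset.Icc 1 N, (0 : ℝ))) :=
      tendsto_finset_sum _ fun m _ => h1 m
    simpa using this
  have hTu : Tendsto u atTop (nhds L) := by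
    have := hA.add (((h2.sub hA').const_mul L))
    simpa using this
  have htu : ∀ᶠ n in atTop, t n ≤ u n := by
    filter_upwards [eventually_ge_atTop N] with n hn
    rw [ht n]
    simp only [hu]
    have hsplit : Finset.Icc 1 n = Finset.Icc 1 N ∪ Finset.Ioc N n := by
      ext a
      simp only [Finset.mem_Icc, Finset.mem_union, Finset.mem_Ioc]
      omega
    have hdisj : Disjoint (Finset.Icc 1 N) (Finset.Ioc N n) := by
      apply Finset.disjoint_left.2
      intro a ha ha'
      simp only [Finset.mem_Icc, Finset.mem_Ioc] at ha ha'
      omega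
    rw [hsplit, Finset.sum_union hdisj, Finset.sum_union hdisj]
    have hbound : ∑ m ∈ Finset.Ioc N n, c n m * s m ≤
        ∑ m ∈ Finset.Ioc N n, c n m * L := by
      apply Finset.sum_le_sum
      intro m hm
      simp only [Finset.mem_Ioc] at hm
      exact mul_le_mul_of_nonneg_left (hN m (by omega)).le (hc n m)
    have h3 : ∑ m ∈ Finset.Ioc N n, c n m * L = L * ∑ m ∈ Finset.Ioc N n, c n m := by
      rw [Finset.mul_sum]
      exact Finset.sum_congr rfl fun m _ => mul_comm _ _
    have h4 : L * ((∑ m ∈ Finset.Icc 1 N, c n m + ∑ m ∈ Finset.Ioc N n, c n m)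
        - ∑ m ∈ Finset.Icc 1 N, c n m) = L * ∑ m ∈ Finset.Ioc N n, c n m := by ring
    linarith
  calc limsup (fun n => (t n : EReal)) atTop
      ≤ limsup (fun n => (u n : EReal)) atTop := by
        apply limsup_le_limsup
        · filter_upwards [htu] with n h using EReal.coe_le_coe_iff.2 h
        · exact isCobounded_le_of_bot
        · exact isBounded_le_of_top
    _ = (L : EReal) := by
        apply Tendsto.limsup_eq
        exact (continuous_coe_real_ereal.tendsto L).comp hTu

private lemma toeplitz_limsup
    (s : ℕ → ℝ) (c : ℕ → ℕ → ℝ) (hc : ∀ n m, 0 ≤ c n m)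
    (h1 : ∀ m, Tendsto (fun n => c n m) atTop (nhds 0))
    (h2 : Tendsto (fun n => ∑ m ∈ Finset.Icc 1 n, c n m) atTop (nhds 1))
    (t : ℕ → ℝ) (ht : ∀ n, t n = ∑ m ∈ Finset.Icc 1 n, c n m * s m) :
    limsup (fun n => (t n : EReal)) atTop ≤ limsup (fun n => (s n : EReal)) atTop := by
  refine EReal.le_of_forall_lt_iff_le.1 fun L hL => ?_
  have hev : ∀ᶠ n in atTop, s n < L := by
    have := eventually_lt_of_limsup_lt hL
    filter_upwards [this] with n h using EReal.coe_lt_coe_iff.1 h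
  exact toeplitz_key s c hc h1 h2 t ht L hev

theorem toeplitz_schur_liminf_limsup
    (s : ℕ → ℝ) (c : ℕ → ℕ → ℝ) (hc : ∀ n m, 0 ≤ c n m)
    (h1 : ∀ m, Tendsto (fun n => c n m) atTop (nhds 0))
    (h2 : Tendsto (fun n => ∑ m ∈ Finset.Icc 1 n, c n m) atTop (nhds 1))
    (t : ℕ → ℝ) (ht : ∀ n, t n = ∑ m ∈ Finset.Icc 1 n, c n m * s m) :
    liminf (fun n => (s n : EReal)) atTop ≤ liminf (fun n => (t n : EReal)) atTop ∧
    liminf (fun n => (t n : EReal)) atTop ≤ limsup (fun n => (t n : EReal)) atTop ∧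
    limsup (fun n => (t n : EReal)) atTop ≤ limsup (fun n => (s n : EReal)) atTop := by
  refine ⟨?_, liminf_le_limsup, toeplitz_limsup s c hc h1 h2 t ht⟩
  have hneg : limsup (fun n => ((-t n : ℝ) : EReal)) atTop ≤
      limsup (fun n => ((-s n : ℝ) : EReal)) atTop := by
    apply toeplitz_limsup (fun n => -s n) c hc h1 h2 (fun n => -t n)
    intro n
    rw [ht n, ← Finset.sum_neg_distrib]
    exact Finset.sum_congr rfl fun m _ => by ring
  have e1 : (fun n => ((-t n : ℝ) : EReal)) = -fun n => (t n : EReal) := by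
    funext n; simp [EReal.coe_neg]
  have e2 : (fun n => ((-s n : ℝ) : EReal)) = -fun n => (s n : EReal) := by
    funext n; simp [EReal.coe_neg]
  rw [e1, e2, EReal.limsup_neg, EReal.limsup_neg, EReal.neg_le_neg_iff] at hneg
  exact hneg
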